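/- For a smooth function f on the circle, Λ∘[𝓗, 𝓗f]∘Λ = Λ∘f∘Λ − D∘f∘D as operators on smooth functions, where f and 𝓗f act by multiplication. -/

import Mathlib

lemma core_sign (m n : ℤ) : (m - n).sign * (m * |n| - |m| * n) = |m| * |n| - m * n := by
  rcases le_or_gt 0 m with hm | hm <;> rcases le_or_gt 0 n with hn | hn
  · rw [abs_of_nonneg hm, abs_of_nonneg hn]; ring
  · have hs : (m - n).sign = 1 := Int.sign_eq_one_iff_pos.mpr (by omega)
    rw [hs, abs_of_nonneg hm, abs_of_neg hn]; ring
  · have hs : (m - n).sign = -1 := Int.sign_eq_neg_one_iff_neg.mpr (by omega)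
    rw [hs, abs_of_neg hm, abs_of_nonneg hn]; ring
  · rw [abs_of_neg hm, abs_of_neg hn]; ring

lemma keyZ (m n : ℤ) :
    |m| * m.sign * ((m - n).sign * |n|) - |m| * ((m - n).sign * (n.sign * |n|))
      = |m| * |n| - m * n := by
  have h1 : m.sign * |m| = m := Int.sign_mul_abs m
  have h2 : n.sign * |n| = n := Int.sign_mul_abs n
  calc |m| * m.sign * ((m - n).sign * |n|) - |m| * ((m - n).sign * (n.sign * |n|))
      = (m - n).sign * ((m.sign * |m|) * |n| - |m| * (n.sign * |n|)) := by ring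
    _ = (m - n).sign * (m * |n| - |m| * n) := by rw [h1, h2]
    _ = |m| * |n| - m * n := core_sign m n

lemma sign_norm_le (x : ℤ) : ‖((x.sign : ℤ) : ℂ)‖ ≤ 1 := by
  rcases lt_trichotomy x 0 with h | h | h
  · simp [Int.sign_eq_neg_one_iff_neg.mpr h]
  · simp [h]
  · simp [Int.sign_eq_one_iff_pos.mpr h]

theorem stmt_5 (a c : ℤ → ℂ)
    (ha : ∀ k : ℕ, Summable (fun n : ℤ => (|n| : ℝ) ^ k * ‖a n‖))
    (hc : ∀ k : ℕ, Summable (fun n : ℤ => (|n| : ℝ) ^ k * ‖c n‖)) :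
    ∀ m : ℤ,
      ((|m| : ℤ) : ℂ) *
          ((Int.sign m : ℂ) *
              (∑' n : ℤ, (Int.sign (m - n) : ℂ) * a (m - n) * ((|n| : ℤ) : ℂ) * c n)
            - ∑' n : ℤ, (Int.sign (m - n) : ℂ) * a (m - n) * (Int.sign n : ℂ) *
                ((|n| : ℤ) : ℂ) * c n)
        = ((|m| : ℤ) : ℂ) * (∑' n : ℤ, a (m - n) * ((|n| : ℤ) : ℂ) * c n)
          - (m : ℂ) * ∑' n : ℤ, a (m - n) * (n : ℂ) * c n := by
  intro m
  have hA : Summable fun n : ℤ => ‖a n‖ := by simpa using ha 0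
  have hC1 : Summable fun n : ℤ => (|n| : ℝ) * ‖c n‖ := by simpa using hc 1
  have hCle : ∀ j, ‖a j‖ ≤ ∑' i : ℤ, ‖a i‖ := fun j => Summable.le_tsum hA j fun _ _ => norm_nonneg _
  set C := ∑' i : ℤ, ‖a i‖ with hC
  have hC0 : 0 ≤ C := tsum_nonneg fun _ => norm_nonneg _
  have key : ∀ s : ℤ → ℂ, (∀ n, ‖s n‖ ≤ 1) →
      Summable fun n : ℤ => s n * a (m - n) * ((|n| : ℤ) : ℂ) * c n := by
    intro s hs
    apply Summable.of_norm_bounded (g := fun n : ℤ => C * ((|n| : ℝ) * ‖c n‖)) (hC1.mul_left C)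
    intro n
    have hnrm : ‖((|n| : ℤ) : ℂ)‖ = (|n| : ℝ) := by
      rw [Complex.norm_intCast]; push_cast; exact abs_abs _
    calc ‖s n * a (m - n) * ((|n| : ℤ) : ℂ) * c n‖
        = ‖s n‖ * ‖a (m - n)‖ * ‖((|n| : ℤ) : ℂ)‖ * ‖c n‖ := by simp [norm_mul]
      _ ≤ 1 * C * (|n| : ℝ) * ‖c n‖ := by
          rw [hnrm]; gcongr <;> [exact hs n; exact hCle _]
      _ = C * ((|n| : ℝ) * ‖c n‖) := by ring
  have hT1 : Summable fun n : ℤ => ((m - n).sign : ℂ) * a (m - n) * ((|n| : ℤ) : ℂ) * c n :=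
    key _ fun n => sign_norm_le _
  have hT2 : Summable fun n : ℤ =>
      ((m - n).sign : ℂ) * a (m - n) * ((n.sign : ℤ) : ℂ) * ((|n| : ℤ) : ℂ) * c n := by
    refine (key (fun n => ((m - n).sign : ℂ) * ((n.sign : ℤ) : ℂ)) fun n => ?_).congr
      fun n => by ring
    rw [norm_mul]
    exact mul_le_one₀ (sign_norm_le _) (norm_nonneg _) (sign_norm_le _)
  have hT3 : Summable fun n : ℤ => a (m - n) * ((|n| : ℤ) : ℂ) * c n :=
    (key (fun _ => 1) fun n => by simp).congr fun n => by ring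
  have hT4 : Summable fun n : ℤ => a (m - n) * (n : ℂ) * c n := by
    refine (key (fun n => ((n.sign : ℤ) : ℂ)) fun n => sign_norm_le _).congr fun n => ?_
    have h : ((n.sign : ℤ) : ℂ) * ((|n| : ℤ) : ℂ) = (n : ℂ) := by
      rw [← Int.cast_mul, Int.sign_mul_abs]
    calc ((n.sign : ℤ) : ℂ) * a (m - n) * ((|n| : ℤ) : ℂ) * c n
        = a (m - n) * (((n.sign : ℤ) : ℂ) * ((|n| : ℤ) : ℂ)) * c n := by ring
      _ = a (m - n) * (n : ℂ) * c n := by rw [h]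
  have e1 : (∑' n : ℤ, ((((|m| : ℤ) : ℂ) * ((m.sign : ℤ) : ℂ)) *
        (((m - n).sign : ℂ) * a (m - n) * ((|n| : ℤ) : ℂ) * c n)
      - ((|m| : ℤ) : ℂ) *
        (((m - n).sign : ℂ) * a (m - n) * ((n.sign : ℤ) : ℂ) * ((|n| : ℤ) : ℂ) * c n)))
      = ((|m| : ℤ) : ℂ) *
          (((m.sign : ℤ) : ℂ) *
              (∑' n : ℤ, ((m - n).sign : ℂ) * a (m - n) * ((|n| : ℤ) : ℂ) * c n)
            - ∑' n : ℤ, ((m - n).sign : ℂ) * a (m - n) * ((n.sign : ℤ) : ℂ) *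
                ((|n| : ℤ) : ℂ) * c n) := by
    rw [Summable.tsum_sub (hT1.mul_left _) (hT2.mul_left _), tsum_mul_left, tsum_mul_left]
    ring
  have e2 : (∑' n : ℤ, (((|m| : ℤ) : ℂ) * (a (m - n) * ((|n| : ℤ) : ℂ) * c n)
      - (m : ℂ) * (a (m - n) * (n : ℂ) * c n)))
      = ((|m| : ℤ) : ℂ) * (∑' n : ℤ, a (m - n) * ((|n| : ℤ) : ℂ) * c n)
        - (m : ℂ) * ∑' n : ℤ, a (m - n) * (n : ℂ) * c n := by
    rw [Summable.tsum_sub (hT3.mul_left _) (hT4.mul_left _), tsum_mul_left, tsum_mul_left]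
  rw [← e1, ← e2]
  apply tsum_congr
  intro n
  have hZ := keyZ m n
  have hC2 : ((|m| * m.sign * ((m - n).sign * |n|) - |m| * ((m - n).sign * (n.sign * |n|)) : ℤ) : ℂ)
      = ((|m| * |n| - m * n : ℤ) : ℂ) := by exact_mod_cast congrArg (Int.cast : ℤ → ℂ) hZ
  push_cast at hC2
  linear_combination (a (m - n) * c n) * hC2
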